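/- Let D be a countably infinite discrete space. Then the hyperspace F_2(D) of nonempty subsets of D with at most two points, equipped with the Fell topology, is not a D_1-space. -/

import Mathlib

open Set TopologicalSpace

universe u v

/-- The Fell topology on the collection of all subsets of `X`, generated by the subbase
consisting of the sets `U⁻ = {H | H ∩ U ≠ ∅}` for `U` open and
`(Kᶜ)⁺ = {H | H ⊆ Kᶜ}` for `K` compact. -/
def fellTopology (X : Type u) [TopologicalSpace X] : TopologicalSpace (Set X) :=
  TopologicalSpace.generateFrom
    ({S | ∃ U : Set X, IsOpen U ∧ S = {H : Set X | (H ∩ U).Nonempty}} ∪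
     {S | ∃ K : Set X, IsCompact K ∧ S = {H : Set X | H ⊆ Kᶜ}})

/-- The Vietoris topology on the collection of all subsets of `X`, generated by the subbase
consisting of the sets `U⁺ = {H | H ⊆ U}` and `U⁻ = {H | H ∩ U ≠ ∅}` for `U` open. -/
def vietorisTopology (X : Type u) [TopologicalSpace X] : TopologicalSpace (Set X) :=
  TopologicalSpace.generateFrom
    ({S | ∃ U : Set X, IsOpen U ∧ S = {H : Set X | H ⊆ U}} ∪
     {S | ∃ U : Set X, IsOpen U ∧ S = {H : Set X | (H ∩ U).Nonempty}})

/-- A collection `S` of subsets of `X`, viewed as a hyperspace with the Fell topology. -/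
def FellHyper (X : Type u) [TopologicalSpace X] (S : Set (Set X)) : Type u :=
  {A : Set X // A ∈ S}

/-- A collection `S` of subsets of `X`, viewed as a hyperspace with the Vietoris topology. -/
def VietorisHyper (X : Type u) [TopologicalSpace X] (S : Set (Set X)) : Type u :=
  {A : Set X // A ∈ S}

instance FellHyper.instTopologicalSpace (X : Type u) [TopologicalSpace X] (S : Set (Set X)) :
    TopologicalSpace (FellHyper X S) :=
  TopologicalSpace.induced (Subtype.val : {A : Set X // A ∈ S} → Set X) (fellTopology X)

instance VietorisHyper.instTopologicalSpace (X : Type u) [TopologicalSpace X] (S : Set (Set X)) :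
    TopologicalSpace (VietorisHyper X S) :=
  TopologicalSpace.induced (Subtype.val : {A : Set X // A ∈ S} → Set X) (vietorisTopology X)

/-- The underlying subset of `X` of a point of a Fell hyperspace. -/
def FellHyper.carrier {X : Type u} [TopologicalSpace X] {S : Set (Set X)}
    (A : FellHyper X S) : Set X :=
  Subtype.val A

/-- The underlying subset of `X` of a point of a Vietoris hyperspace. -/
def VietorisHyper.carrier {X : Type u} [TopologicalSpace X] {S : Set (Set X)}
    (A : VietorisHyper X S) : Set X :=
  Subtype.val A

/-- `CL(X)`: the nonempty closed subsets of `X`. -/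
def CL (X : Type u) [TopologicalSpace X] : Set (Set X) := {A | A.Nonempty ∧ IsClosed A}

/-- `𝒦(X)`: the nonempty compact subsets of `X`. -/
def Kcal (X : Type u) [TopologicalSpace X] : Set (Set X) := {A | A.Nonempty ∧ IsCompact A}

/-- `ℱ(X)`: the nonempty finite subsets of `X`. -/
def Fcal (X : Type u) : Set (Set X) := {A | A.Nonempty ∧ A.Finite}

/-- `ℱₙ(X)`: the nonempty subsets of `X` with at most `n` points. -/
def Fn (X : Type u) (n : ℕ) : Set (Set X) := {A | A.Nonempty ∧ A.encard ≤ n}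

/-- A space is a `D₁`-space if every nonempty closed subset has a countable
neighborhood base. -/
def IsD1Space (Y : Type v) [TopologicalSpace Y] : Prop :=
  ∀ F : Set Y, F.Nonempty → IsClosed F →
    ∃ B : ℕ → Set Y, (∀ n, IsOpen (B n) ∧ F ⊆ B n) ∧
      ∀ V : Set Y, IsOpen V → F ⊆ V → ∃ n, B n ⊆ V

/-- A space is a `D₀`-space if every nonempty compact subset has a countable
neighborhood base. -/
def IsD0Space (Y : Type v) [TopologicalSpace Y] : Prop :=
  ∀ F : Set Y, F.Nonempty → IsCompact F →
    ∃ B : ℕ → Set Y, (∀ n, IsOpen (B n) ∧ F ⊆ B n) ∧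
      ∀ V : Set Y, IsOpen V → F ⊆ V → ∃ n, B n ⊆ V

/-- A space has a `G_δ`-diagonal if the diagonal is a `G_δ`-set in `X × X`. -/
def HasGdeltaDiagonal (X : Type u) [TopologicalSpace X] : Prop :=
  ∃ U : ℕ → Set (X × X), (∀ n, IsOpen (U n)) ∧ (⋂ n, U n) = {p : X × X | p.1 = p.2}

/-- A space is perfect if every closed subset is a `G_δ`-set. -/
def IsPerfectSpace (Y : Type v) [TopologicalSpace Y] : Prop :=
  ∀ F : Set Y, IsClosed F → ∃ U : ℕ → Set Y, (∀ n, IsOpen (U n)) ∧ F = ⋂ n, U n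

/-- A space has the compact-`G_δ` property if every compact subset is a `G_δ`-set. -/
def CompactGDeltaProperty (Y : Type v) [TopologicalSpace Y] : Prop :=
  ∀ K : Set Y, IsCompact K → ∃ U : ℕ → Set Y, (∀ n, IsOpen (U n)) ∧ K = ⋂ n, U n

/-- `γ`-space. -/
def IsGammaSpace (Y : Type v) [TopologicalSpace Y] : Prop :=
  ∃ g : ℕ → Y → Set Y,
    (∀ n y, IsOpen (g n y) ∧ y ∈ g n y) ∧
    (∀ y, ∀ V : Set Y, IsOpen V → y ∈ V → ∃ n, g n y ⊆ V) ∧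
    (∀ n y, ∃ m, ∀ z ∈ g m y, g m z ⊆ g n y)

/-- A space has a `G_δ*`-diagonal if there is a sequence `𝒰 n` of open covers such that
`{x} = ⋂ n, closure (st(x, 𝒰 n))` for every `x`. -/
def HasGdeltaStarDiagonal (X : Type u) [TopologicalSpace X] : Prop :=
  ∃ 𝒰 : ℕ → Set (Set X),
    (∀ n, ∀ U ∈ 𝒰 n, IsOpen U) ∧ (∀ n, ⋃₀ 𝒰 n = univ) ∧
    ∀ x : X, (⋂ n, closure (⋃₀ {U ∈ 𝒰 n | x ∈ U})) = {x}

section Aux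

variable {D : Type u} [TopologicalSpace D] [DiscreteTopology D]

/-- Key: if `W` is Fell-open and contains a singleton `{d}`, then `{d, x} ∈ W`
for all `x` outside a finite set. -/
lemma fell_key {W : Set (Set D)}
    (hW : TopologicalSpace.GenerateOpen
      ({S | ∃ U : Set D, IsOpen U ∧ S = {H : Set D | (H ∩ U).Nonempty}} ∪
       {S | ∃ K : Set D, IsCompact K ∧ S = {H : Set D | H ⊆ Kᶜ}}) W) :
    ∀ d : D, ({d} : Set D) ∈ W →
      ∃ F : Set D, F.Finite ∧ ∀ x ∉ F, ({d, x} : Set D) ∈ W := by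
  induction hW with
  | basic s hs =>
    intro d hd
    rcases hs with ⟨U, hU, rfl⟩ | ⟨K, hK, rfl⟩
    · have hdU : d ∈ U := by
        obtain ⟨y, hy1, hy2⟩ := hd
        simp only [mem_singleton_iff] at hy1; subst hy1; exact hy2
      exact ⟨∅, finite_empty, fun x _ => ⟨d, by simp, hdU⟩⟩
    · have hdK : d ∉ K := by
        have := hd (mem_singleton d); simpa using this
      refine ⟨K, hK.finite_of_discrete, fun x hx => ?_⟩
      intro y hy
      rcases hy with rfl | hy
      · exact hdK
      · simp only [mem_singleton_iff] at hy; subst hy; exact hx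
  | univ => exact fun d _ => ⟨∅, finite_empty, fun x _ => mem_univ _⟩
  | inter s t _ _ ihs iht =>
    intro d hd
    obtain ⟨F1, hF1, h1⟩ := ihs d hd.1
    obtain ⟨F2, hF2, h2⟩ := iht d hd.2
    exact ⟨F1 ∪ F2, hF1.union hF2, fun x hx =>
      ⟨h1 x (fun h => hx (Or.inl h)), h2 x (fun h => hx (Or.inr h))⟩⟩
  | sUnion S _ ih =>
    intro d hd
    obtain ⟨s, hsS, hds⟩ := hd
    obtain ⟨F, hF, h⟩ := ih s hsS d hds
    exact ⟨F, hF, fun x hx => ⟨s, hsS, h x hx⟩⟩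

lemma pair_mem_Fn {x y : D} : ({x, y} : Set D) ∈ Fn D 2 := by
  refine ⟨⟨x, by simp⟩, ?_⟩
  calc ({x, y} : Set D).encard ≤ ({y} : Set D).encard + 1 := Set.encard_insert_le _ _
    _ ≤ 2 := by simp [Set.encard_singleton]; rfl

lemma Fn_two_cases {A : Set D} (hA : A ∈ Fn D 2) :
    (∃ x, A = {x}) ∨ ∃ x y, x ≠ y ∧ A = {x, y} := by
  obtain ⟨hne, hle⟩ := hA
  rcases eq_or_lt_of_le hle with h2 | h2
  · right; exact Set.encard_eq_two.mp h2
  · left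
    have h1 : A.encard ≤ 1 := Order.le_of_lt_add_one (by exact_mod_cast h2)
    rcases Set.encard_le_one_iff_eq.mp h1 with h | h
    · exact absurd h (Set.nonempty_iff_ne_empty.mp hne)
    · exact h

end Aux

/-- For a countably infinite discrete space `D`, the hyperspace
`ℱ₂(D)` with the Fell topology is not a `D₁`-space. -/
theorem statement1 (D : Type u) [TopologicalSpace D] [DiscreteTopology D]
    [Countable D] [Infinite D] :
    ¬ IsD1Space (FellHyper D (Fn D 2)) := by
  intro h
  classical
  obtain ⟨e⟩ : Nonempty (D ≃ ℕ) := nonempty_equiv_of_countable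
  have hsing : ∀ d : D, ({d} : Set D) ∈ Fn D 2 := fun d => Set.pair_eq_singleton d ▸ pair_mem_Fn
  set sub : Set (Set (Set D)) :=
    ({S | ∃ U : Set D, IsOpen U ∧ S = {H : Set D | (H ∩ U).Nonempty}} ∪
     {S | ∃ K : Set D, IsCompact K ∧ S = {H : Set D | H ⊆ Kᶜ}}) with hsub
  have hopen_iff : ∀ s : Set (FellHyper D (Fn D 2)),
      IsOpen s ↔ ∃ W, TopologicalSpace.GenerateOpen sub W ∧ Subtype.val ⁻¹' W = s :=
    fun s => Iff.rfl
  set S : Set (FellHyper D (Fn D 2)) := {A | ∃ d : D, A.1 = {d}} with hS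
  have hSne : S.Nonempty := ⟨⟨{e.symm 0}, hsing _⟩, ⟨e.symm 0, rfl⟩⟩
  have hScl : IsClosed S := by
    rw [← isOpen_compl_iff, hopen_iff]
    refine ⟨⋃ p : D × D, ⋃ _ : p.1 ≠ p.2,
        ({H : Set D | (H ∩ {p.1}).Nonempty} ∩ {H : Set D | (H ∩ {p.2}).Nonempty}), ?_, ?_⟩
    · letI t : TopologicalSpace (Set D) := TopologicalSpace.generateFrom sub
      show @IsOpen _ t _
      refine isOpen_iUnion fun p => isOpen_iUnion fun hp => IsOpen.inter ?_ ?_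
      · exact TopologicalSpace.isOpen_generateFrom_of_mem (Or.inl ⟨{p.1}, isOpen_discrete _, rfl⟩)
      · exact TopologicalSpace.isOpen_generateFrom_of_mem (Or.inl ⟨{p.2}, isOpen_discrete _, rfl⟩)
    · ext A
      simp only [mem_preimage, mem_iUnion, mem_inter_iff, mem_compl_iff]
      constructor
      · rintro ⟨p, hp, ⟨x, hx1, hx2⟩, ⟨y, hy1, hy2⟩⟩ ⟨d, hd⟩
        simp only [mem_singleton_iff] at hx2 hy2
        rw [hd] at hx1 hy1
        simp only [mem_singleton_iff] at hx1 hy1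
        exact hp (by rw [← hx2, hx1, ← hy1, hy2])
      · intro hA
        rcases Fn_two_cases A.2 with ⟨x, hx⟩ | ⟨x, y, hxy, hxy2⟩
        · exact absurd ⟨x, hx⟩ hA
        · exact ⟨(x, y), hxy, ⟨x, by rw [hxy2]; exact Or.inl rfl, rfl⟩,
            ⟨y, by rw [hxy2]; exact Or.inr rfl, rfl⟩⟩
  obtain ⟨B, hB, hbase⟩ := h S hSne hScl
  choose W hWopen hWeq using fun n => (hopen_iff (B n)).mp (hB n).1
  have hsingW : ∀ n (d : D), ({d} : Set D) ∈ W n := fun n d => by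
    have : (⟨{d}, hsing d⟩ : FellHyper D (Fn D 2)) ∈ B n := (hB n).2 ⟨d, rfl⟩
    rw [← hWeq n] at this
    exact this
  choose F hFfin hFmem using fun n d => fell_key (hWopen n) d (hsingW n d)
  have hex : ∀ n : ℕ, ∃ k : ℕ, n < k ∧ e.symm k ∉ F n (e.symm n) := by
    intro n
    have hfin : ({k : ℕ | e.symm k ∈ F n (e.symm n)} ∪ Iic n).Finite := by
      refine Set.Finite.union ?_ (finite_Iic n)
      exact Set.Finite.preimage e.symm.injective.injOn (hFfin n (e.symm n))
    obtain ⟨k, hk⟩ := hfin.infinite_compl.nonempty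
    simp only [mem_compl_iff, mem_union, mem_setOf_eq, mem_Iic, not_or, not_le] at hk
    exact ⟨k, hk.2, hk.1⟩
  choose m hm1 hm2 using hex
  set V : Set (FellHyper D (Fn D 2)) :=
    {A | ∀ x ∈ A.1, ∀ y ∈ A.1, x ≠ y → m (e x) < e y ∨ m (e y) < e x} with hV
  have hSV : S ⊆ V := by
    rintro A ⟨d, hd⟩ x hx y hy hxy
    rw [hd] at hx hy
    simp only [mem_singleton_iff] at hx hy
    exact absurd (hx.trans hy.symm) hxy
  have hVopen : IsOpen V := by
    rw [hopen_iff]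
    refine ⟨⋃ d : D, ({H : Set D | (H ∩ {d}).Nonempty} ∩
        {H : Set D | H ⊆ {z : D | z ≠ d ∧ e z ≤ m (e d)}ᶜ}), ?_, ?_⟩
    · letI t : TopologicalSpace (Set D) := TopologicalSpace.generateFrom sub
      show @IsOpen _ t _
      refine isOpen_iUnion fun d => IsOpen.inter ?_ ?_
      · exact TopologicalSpace.isOpen_generateFrom_of_mem (Or.inl ⟨{d}, isOpen_discrete _, rfl⟩)
      · refine TopologicalSpace.isOpen_generateFrom_of_mem (Or.inr ⟨_, ?_, rfl⟩)
        have hLfin : {z : D | z ≠ d ∧ e z ≤ m (e d)}.Finite := by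
          have hsub2 : {z : D | z ≠ d ∧ e z ≤ m (e d)} ⊆ e ⁻¹' (Iic (m (e d))) :=
            fun z hz => hz.2
          exact (Set.Finite.preimage e.injective.injOn (finite_Iic _)).subset hsub2
        exact hLfin.isCompact
    · ext A
      simp only [mem_preimage, mem_iUnion, mem_inter_iff, mem_setOf_eq]
      constructor
      · rintro ⟨d, ⟨w, hw1, hw2⟩, hsubc⟩
        simp only [mem_singleton_iff] at hw2
        subst hw2
        intro x hx y hy hxy
        have hA2 : ({x, y} : Set D) = A.1 := by
          refine Set.Finite.eq_of_subset_of_encard_le' ?_ ?_ ?_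
          · exact Set.finite_of_encard_le_coe (by exact_mod_cast A.2.2)
          · intro z hz
            rcases hz with rfl | hz
            · exact hx
            · simp only [mem_singleton_iff] at hz; subst hz; exact hy
          · rw [Set.encard_pair hxy]
            exact A.2.2
        have hd : w = x ∨ w = y := by
          have : w ∈ ({x, y} : Set D) := hA2 ▸ hw1
          simpa using this
        rcases hd with rfl | rfl
        · left
          have := hsubc hy
          simp only [mem_compl_iff, mem_setOf_eq, not_and, not_le] at this
          exact this (fun hcon => hxy hcon.symm)
        · right
          have := hsubc hx
          simp only [mem_compl_iff, mem_setOf_eq, not_and, not_le] at this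
          exact this hxy
      · intro hAV
        rcases Fn_two_cases A.2 with ⟨a, ha⟩ | ⟨a, b, hab, hab2⟩
        · refine ⟨a, ⟨a, by rw [ha]; exact rfl, rfl⟩, ?_⟩
          intro z hz
          rw [ha] at hz
          simp only [mem_singleton_iff] at hz
          subst hz
          simp only [mem_compl_iff, mem_setOf_eq, not_and, not_le]
          intro hcon
          exact absurd rfl hcon
        · have hds := hAV a (by rw [hab2]; exact Or.inl rfl) b
            (by rw [hab2]; exact Or.inr rfl) hab
          rcases hds with hlt | hlt
          · refine ⟨a, ⟨a, by rw [hab2]; exact Or.inl rfl, rfl⟩, ?_⟩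
            intro z hz
            rw [hab2] at hz
            simp only [mem_compl_iff, mem_setOf_eq, not_and, not_le]
            rcases hz with rfl | hz
            · intro hcon; exact absurd rfl hcon
            · simp only [mem_singleton_iff] at hz
              subst hz
              intro _
              exact hlt
          · refine ⟨b, ⟨b, by rw [hab2]; exact Or.inr rfl, rfl⟩, ?_⟩
            intro z hz
            rw [hab2] at hz
            simp only [mem_compl_iff, mem_setOf_eq, not_and, not_le]
            rcases hz with rfl | hz
            · intro _; exact hlt
            · simp only [mem_singleton_iff] at hz
              subst hz
              intro hcon
              exact absurd rfl hcon
  obtain ⟨n, hn⟩ := hbase V hVopen hSV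
  have hmemB : (⟨{e.symm n, e.symm (m n)}, pair_mem_Fn⟩ : FellHyper D (Fn D 2)) ∈ B n := by
    rw [← hWeq n]
    exact hFmem n (e.symm n) (e.symm (m n)) (hm2 n)
  have hne2 : e.symm n ≠ e.symm (m n) :=
    fun hcon => Nat.ne_of_lt (hm1 n) (e.symm.injective hcon)
  have hmemV := hn hmemB
  have h1 := hmemV (e.symm n) (Or.inl rfl) (e.symm (m n)) (Or.inr rfl) hne2
  simp only [Equiv.apply_symm_apply] at h1
  rcases h1 with hlt | hlt
  · exact lt_irrefl _ hlt
  · exact absurd hlt (not_lt.mpr (le_of_lt (lt_trans (hm1 n) (hm1 (m n)))))
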